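/- Let γ : ℝ → ℂ be differentiable at x with γ′(x) ≠ 0, and let S : ℂ → ℂ be complex-differentiable at γ(x), with conj(γ(y)) = S(γ(y)) for all y in a neighborhood of x. Then S′(γ(x)) = conj(γ′(x))/γ′(x); in particular |S′(γ(x))| = 1, and writing γ′(x) = μ·e^{iθ} with μ > 0, one has S′(γ(x)) = e^{−2iθ}. -/

import Mathlib

/-- The clinant: if conj(γ(y)) = S(γ(y)) near x and γ′(x) = g ≠ 0, with S′(γ(x)) = s, then
s = conj(g)/g, |s| = 1, and g = μ·e^{iθ} (μ > 0) gives s = e^{−2iθ}. -/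
theorem stmt10 (γ : ℝ → ℂ) (S : ℂ → ℂ) (x : ℝ) (g s : ℂ)
    (hγ : HasDerivAt γ g x) (hg : g ≠ 0)
    (hS : HasDerivAt S s (γ x))
    (heq : ∀ᶠ y in nhds x, starRingEnd ℂ (γ y) = S (γ y)) :
    s = starRingEnd ℂ g / g ∧ ‖s‖ = 1 ∧
      ∀ μ θ : ℝ, 0 < μ → g = (μ : ℂ) * Complex.exp (Complex.I * θ) →
        s = Complex.exp (-2 * Complex.I * θ) := by
  have h1 : HasDerivAt (fun y => S (γ y)) (g • s) x := hS.scomp x hγ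
  have h2 : HasDerivAt (fun y => starRingEnd ℂ (γ y)) (starRingEnd ℂ g) x := by
    exact (Complex.conjCLE.hasFDerivAt.comp_hasDerivAt x hγ)
  have h3 : HasDerivAt (fun y => S (γ y)) (starRingEnd ℂ g) x :=
    h2.congr_of_eventuallyEq (by filter_upwards [heq] with y hy using hy.symm)
  have key : starRingEnd ℂ g = g * s := by
    have := h1.unique h3
    simpa [smul_eq_mul] using this.symm
  have hs : s = starRingEnd ℂ g / g := by
    field_simp [key, mul_comm]
    rw [key, mul_comm]
  refine ⟨hs, ?_, ?_⟩
  · rw [hs, norm_div]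
    simp [Complex.norm_conj, div_self (norm_ne_zero_iff.mpr hg)]
  · intro μ θ hμ hgeq
    have hμ0 : (μ : ℂ) ≠ 0 := by exact_mod_cast hμ.ne'
    rw [hs, hgeq]
    have : starRingEnd ℂ ((μ : ℂ) * Complex.exp (Complex.I * θ)) =
        (μ : ℂ) * Complex.exp (-(Complex.I * θ)) := by
      rw [map_mul, ← Complex.exp_conj]
      simp [Complex.conj_ofReal]
    rw [this, mul_div_mul_left _ _ hμ0, ← Complex.exp_sub]
    ring_nf
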